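/- Let L ≥ 1 and let T be the cyclic-shift map on functions a : ZMod L → ZMod 2 given by (T a)(r) = a(r−1). The composite Rule-54 Floquet map (odd layer after even layer), restricted to even-dimer configurations built from hard-core a (i.e., a(r)·a(r+1) = 0 for all r), sends the even-dimer encoding of a to the even-dimer encoding of T a. -/

import Mathlib

/-- The Rule-54 Boolean update. -/
def chi (x y z : ZMod 2) : ZMod 2 := x + y + z + x * z

/-- The even Rule-54 layer: simultaneously updates all even-indexed sites. -/
def evenLayer (L : ℕ) (s : ZMod (2 * L) → ZMod 2) : ZMod (2 * L) → ZMod 2 :=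
  fun c => if c.val % 2 = 0 then chi (s (c - 1)) (s c) (s (c + 1)) else s c

/-- The odd Rule-54 layer: simultaneously updates all odd-indexed sites. -/
def oddLayer (L : ℕ) (s : ZMod (2 * L) → ZMod 2) : ZMod (2 * L) → ZMod 2 :=
  fun c => if c.val % 2 = 1 then chi (s (c - 1)) (s c) (s (c + 1)) else s c

/-- The even-dimer encoding of a coarse-grained configuration: `s (2r) = s (2r+1) = a r`. -/
def evenDimer (L : ℕ) (a : ZMod L → ZMod 2) : ZMod (2 * L) → ZMod 2 :=
  fun c => a ((c.val / 2 : ℕ) : ZMod L)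

/-- One Rule-54 Floquet period (odd layer after even layer) acts on even-dimer
hard-core configurations as the coarse-grained cyclic shift `(T a) r = a (r - 1)`. -/
theorem rule54_floquet_translation (L : ℕ) (hL : 1 ≤ L)
    (a : ZMod L → ZMod 2) (ha : ∀ r, a r * a (r + 1) = 0) :
    oddLayer L (evenLayer L (evenDimer L a)) = evenDimer L (fun r => a (r - 1)) := by
  haveI hNZ : NeZero (2*L) := ⟨by omega⟩
  have hval : ∀ m : ℕ, ((m : ZMod (2*L))).val = m % (2*L) := fun m => ZMod.val_natCast _ m
  have hpar : ∀ m : ℕ, ((m : ZMod (2*L))).val % 2 = m % 2 := fun m => by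
    rw [hval]; exact Nat.mod_mod_of_dvd _ ⟨L, rfl⟩
  have hdim : ∀ (b : ZMod L → ZMod 2) (m : ℕ),
      evenDimer L b ((m : ZMod (2*L))) = b (((m/2 : ℕ)) : ZMod L) := by
    intro b m
    unfold evenDimer
    rw [hval, Nat.mod_mul_right_div_self, ZMod.natCast_mod]
  have hneg : ((2*L - 1 : ℕ) : ZMod (2*L)) = -1 := by
    have h2 : (((2*L - 1) + 1 : ℕ) : ZMod (2*L)) = 0 := by
      have h3 : 2*L - 1 + 1 = 2*L := by omega
      rw [h3]; exact ZMod.natCast_self _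
    push_cast at h2
    exact eq_neg_of_add_eq_zero_left h2
  have hsub : ∀ m : ℕ, ((m + (2*L-1) : ℕ) : ZMod (2*L)) = (m : ZMod (2*L)) - 1 := by
    intro m; rw [Nat.cast_add, hneg]; ring
  have hnegL : ((L - 1 : ℕ) : ZMod L) = -1 := by
    have h2 : (((L - 1) + 1 : ℕ) : ZMod L) = 0 := by
      have h3 : L - 1 + 1 = L := by omega
      rw [h3]; exact ZMod.natCast_self _
    push_cast at h2
    exact eq_neg_of_add_eq_zero_left h2
  have hsubL : ∀ m : ℕ, ((m + (L-1) : ℕ) : ZMod L) = (m : ZMod L) - 1 := by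
    intro m; rw [Nat.cast_add, hnegL]; ring
  have hcastL2 : ∀ m : ℕ, ((m + L : ℕ) : ZMod L) = (m : ZMod L) := by
    intro m; rw [Nat.cast_add, ZMod.natCast_self, add_zero]
  have hchi : ∀ x y : ZMod 2, chi x y y = x + x * y := by decide
  have hfix : ∀ x : ZMod L, a (x - 1) + a (x - 1) * a x = a (x - 1) := by
    intro x
    have h := ha (x - 1)
    rw [sub_add_cancel] at h
    rw [h, add_zero]
  have hE : ∀ m : ℕ, m % 2 = 0 →
      evenLayer L (evenDimer L a) ((m : ZMod (2*L))) = a (((m/2 : ℕ) : ZMod L) - 1) := by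
    intro m hm
    unfold evenLayer
    rw [if_pos (by rw [hpar]; exact hm)]
    have e1 : (m : ZMod (2*L)) - 1 = ((m + (2*L-1) : ℕ) : ZMod (2*L)) := (hsub m).symm
    have e2 : (m : ZMod (2*L)) + 1 = ((m + 1 : ℕ) : ZMod (2*L)) := by push_cast; ring
    rw [e1, e2, hdim, hdim, hdim]
    have d1 : (m + (2*L-1))/2 = m/2 + (L-1) := by omega
    have d2 : (m+1)/2 = m/2 := by omega
    rw [d1, d2, hsubL, hchi, hfix]
  have hO : ∀ m : ℕ, m % 2 = 1 →
      evenLayer L (evenDimer L a) ((m : ZMod (2*L))) = a ((m/2 : ℕ) : ZMod L) := by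
    intro m hm
    unfold evenLayer
    rw [if_neg (by rw [hpar]; omega), hdim]
  funext c
  obtain ⟨n, rfl⟩ : ∃ n : ℕ, ((n : ℕ) : ZMod (2*L)) = c := ⟨c.val, ZMod.natCast_rightInverse c⟩
  unfold oddLayer
  rw [hpar]
  rcases Nat.even_or_odd n with he | ho
  · have hm : n % 2 = 0 := Nat.even_iff.mp he
    rw [if_neg (by omega), hE n hm, hdim]
  · have hm : n % 2 = 1 := Nat.odd_iff.mp ho
    rw [if_pos hm]
    have e1 : (n : ZMod (2*L)) - 1 = ((n + (2*L-1) : ℕ) : ZMod (2*L)) := (hsub n).symm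
    have e2 : (n : ZMod (2*L)) + 1 = ((n + 1 : ℕ) : ZMod (2*L)) := by push_cast; ring
    rw [e1, e2, hE (n+(2*L-1)) (by omega), hO n hm, hE (n+1) (by omega), hdim]
    have d1 : (n + (2*L-1))/2 = n/2 + L := by omega
    have d2 : (n+1)/2 = n/2 + 1 := by omega
    rw [d1, d2, hcastL2]
    have e3 : ((n/2 + 1 : ℕ) : ZMod L) - 1 = ((n/2 : ℕ) : ZMod L) := by push_cast; ring
    rw [e3, hchi, hfix]
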